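/- In the inhomogeneous exponential corner growth model, for every k, l ∈ ℕ the annealed measure ℙ on ℝ_+^{ℕ²} is ergodic with respect to the shift θ_{k,l}, where θ_{k,l}(ω)(i,j) = ω(i+k, j+l) for i, j ∈ ℕ. That is, if B ⊂ ℝ_+^{ℕ²} is a Borel set with θ_{k,l}^{−1}(B) = B, then ℙ(B) ∈ {0, 1}. -/

import Mathlib

open MeasureTheory ProbabilityTheory Filter Set Topology
open scoped ENNReal

noncomputable section

/-- Last-passage time `G(m, n)` over up-right lattice paths from site `(1,1)` to `(m,n)`;
the weight `W(i+1, j+1)` of site `(i+1, j+1)` is the coordinate `ω (i, j)`. -/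
def lpp (ω : ℕ × ℕ → ℝ) : ℕ → ℕ → ℝ
  | 0, _ => 0
  | _ + 1, 0 => 0
  | m + 1, n + 1 => max (lpp ω m (n + 1)) (lpp ω (m + 1) n) + ω (m, n)

/-- Left endpoint of the support of a Borel measure on `ℝ`. -/
def leftEdge (η : Measure ℝ) : ℝ := sSup {c : ℝ | η (Set.Iio c) = 0}

/-- Right endpoint of the support of a Borel measure on `ℝ`. -/
def rightEdge (η : Measure ℝ) : ℝ := sInf {c : ℝ | η (Set.Ioi c) = 0}

/-- The shift `τ_k × τ_l` acting on pairs of sequences. -/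
def shiftPair (k l : ℕ) (p : (ℕ → ℝ) × (ℕ → ℝ)) : (ℕ → ℝ) × (ℕ → ℝ) :=
  (fun n => p.1 (n + k), fun n => p.2 (n + l))

/-- The shift `θ_{k,l}` on weight configurations: `θ_{k,l}(ω)(i,j) = ω(i+k, j+l)`. -/
def shiftConfig (k l : ℕ) (ω : ℕ × ℕ → ℝ) : ℕ × ℕ → ℝ :=
  fun ij => ω (ij.1 + k, ij.2 + l)

/- ### Auxiliary lemmas -/

lemma shiftConfig_measurable (k l : ℕ) : Measurable (shiftConfig k l) :=
  measurable_pi_lambda _ fun _ => measurable_pi_apply _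

/-- A measure whose `(0,0)` marginal is an exponential distribution with positive rate is a
probability measure. -/
lemma quenched_isProbability {ν : Measure ((ℕ × ℕ) → ℝ)} {r : ℝ} (hr : 0 < r)
    (h : ν.map (fun ω : (ℕ × ℕ) → ℝ => ω (0, 0)) = expMeasure r) :
    IsProbabilityMeasure ν := by
  have h1 : IsProbabilityMeasure (expMeasure r) := isProbabilityMeasure_expMeasure hr
  constructor
  have hc : ν.map (fun ω : (ℕ × ℕ) → ℝ => ω (0, 0)) Set.univ = expMeasure r Set.univ := by
    rw [h]
  rwa [Measure.map_apply (measurable_pi_apply _) MeasurableSet.univ, Set.preimage_univ,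
    h1.measure_univ] at hc

/-- Two measures on the configuration space with independent coordinates, such that the
`(i+k, j+l)` marginal of the first agrees with the `(i,j)` marginal of the second, are related
by the shift `θ_{k,l}`. -/
lemma quenched_map_shift {k l : ℕ} {ν₁ ν₂ : Measure ((ℕ × ℕ) → ℝ)}
    [IsProbabilityMeasure ν₁] [IsProbabilityMeasure ν₂]
    (h1 : iIndepFun (fun ij (ω : (ℕ × ℕ) → ℝ) => ω ij) ν₁)
    (h2 : iIndepFun (fun ij (ω : (ℕ × ℕ) → ℝ) => ω ij) ν₂)
    (hm : ∀ ij : ℕ × ℕ, ν₁.map (fun ω : (ℕ × ℕ) → ℝ => ω (ij.1 + k, ij.2 + l))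
        = ν₂.map (fun ω : (ℕ × ℕ) → ℝ => ω ij)) :
    ν₁.map (shiftConfig k l) = ν₂ := by
  classical
  have hθ : Measurable (shiftConfig k l) := shiftConfig_measurable k l
  haveI : IsProbabilityMeasure (ν₁.map (shiftConfig k l)) :=
    Measure.isProbabilityMeasure_map hθ.aemeasurable
  set σ : ℕ × ℕ → ℕ × ℕ := fun ij => (ij.1 + k, ij.2 + l) with hσ
  have hσinj : Function.Injective σ := by
    intro a b h
    simp only [hσ, Prod.mk.injEq] at h
    exact Prod.ext (by omega) (by omega)
  refine ext_of_generate_finite _ generateFrom_squareCylinders.symm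
    (isPiSystem_squareCylinders (fun _ => ?_) (fun _ => ?_)) ?_ ?_
  · intro s hs t' ht' _
    simp only [Set.mem_setOf_eq] at hs ht' ⊢
    exact hs.inter ht'
  · simp only [Set.mem_setOf_eq]
    exact MeasurableSet.univ
  · rintro S ⟨sf, t, ht, rfl⟩
    simp only [Set.mem_univ_pi, Set.mem_setOf_eq] at ht
    have hSmeas : MeasurableSet ((sf : Set (ℕ × ℕ)).pi t) :=
      MeasurableSet.pi (Finset.countable_toSet _) fun ij _ => ht ij
    rw [Measure.map_apply hθ hSmeas]
    have hpre : shiftConfig k l ⁻¹' ((sf : Set (ℕ × ℕ)).pi t)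
        = ⋂ ij ∈ sf, (fun ω : (ℕ × ℕ) → ℝ => ω (σ ij)) ⁻¹' t ij := by
      ext ω
      simp [Set.mem_pi, shiftConfig, σ]
    set u : ℕ × ℕ → Set ((ℕ × ℕ) → ℝ) :=
      fun q => (fun ω : (ℕ × ℕ) → ℝ => ω q) ⁻¹' t (q.1 - k, q.2 - l) with hu
    have hpair : ∀ ij : ℕ × ℕ, (ij.1 + k - k, ij.2 + l - l) = ij := by
      intro ij
      simp only [Prod.ext_iff]
      constructor <;> omega
    have huσ : ∀ ij : ℕ × ℕ, u (σ ij) = (fun ω : (ℕ × ℕ) → ℝ => ω (σ ij)) ⁻¹' t ij :=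
      fun ij => congrArg (fun q => (fun ω : (ℕ × ℕ) → ℝ => ω (σ ij)) ⁻¹' t q) (hpair ij)
    have himg : (⋂ ij ∈ sf, (fun ω : (ℕ × ℕ) → ℝ => ω (σ ij)) ⁻¹' t ij)
        = ⋂ q ∈ sf.image σ, u q := by
      ext ω
      simp only [Set.mem_iInter, Finset.mem_image]
      constructor
      · rintro h q ⟨ij, hij, rfl⟩
        rw [huσ]
        exact h ij hij
      · intro h ij hij
        rw [← huσ]
        exact h (σ ij) ⟨ij, hij, rfl⟩
    rw [hpre, himg,
      h1.meas_biInter (S := sf.image σ) (s := u)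
        (fun q _ => ⟨t (q.1 - k, q.2 - l), ht _, rfl⟩),
      Finset.prod_image (fun a _ b _ h => hσinj h)]
    have hRHS : ν₂ ((sf : Set (ℕ × ℕ)).pi t)
        = ∏ ij ∈ sf, ν₂ ((fun ω : (ℕ × ℕ) → ℝ => ω ij) ⁻¹' t ij) := by
      rw [Set.pi_def]
      exact h2.meas_biInter (fun ij _ => ⟨t ij, ht ij, rfl⟩)
    rw [hRHS]
    refine Finset.prod_congr rfl fun ij _ => ?_
    have e1 : ν₁ ((fun ω : (ℕ × ℕ) → ℝ => ω (ij.1 + k, ij.2 + l)) ⁻¹' t ij)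
        = (ν₁.map (fun ω : (ℕ × ℕ) → ℝ => ω (ij.1 + k, ij.2 + l))) (t ij) :=
      (Measure.map_apply (measurable_pi_apply (ij.1 + k, ij.2 + l)) (ht ij)).symm
    have e2 : (ν₂.map (fun ω : (ℕ × ℕ) → ℝ => ω ij)) (t ij)
        = ν₂ ((fun ω : (ℕ × ℕ) → ℝ => ω ij) ⁻¹' t ij) :=
      Measure.map_apply (measurable_pi_apply ij) (ht ij)
    rw [huσ ij]
    show ν₁ ((fun ω : (ℕ × ℕ) → ℝ => ω (ij.1 + k, ij.2 + l)) ⁻¹' t ij)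
        = ν₂ ((fun ω : (ℕ × ℕ) → ℝ => ω ij) ⁻¹' t ij)
    rw [e1, hm ij, e2]
  · simp

/-- A set invariant under the shift `θ_{k,l}` with `k, l ≥ 1` has probability `0` or `1` under
any measure making the coordinates independent (Kolmogorov-type 0-1 law). -/
lemma quenched_zero_one {ν : Measure ((ℕ × ℕ) → ℝ)}
    (hind : iIndepFun (fun ij (ω : (ℕ × ℕ) → ℝ) => ω ij) ν)
    {k l : ℕ} (hk : 0 < k) (hl : 0 < l) {B : Set ((ℕ × ℕ) → ℝ)}
    (hB : MeasurableSet B) (hinv : shiftConfig k l ⁻¹' B = B) :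
    ν B = 0 ∨ ν B = 1 := by
  classical
  set s : ℕ × ℕ → MeasurableSpace ((ℕ × ℕ) → ℝ) :=
    fun ij => MeasurableSpace.comap (fun ω : (ℕ × ℕ) → ℝ => ω ij) inferInstance with hs
  have h_le : ∀ ij, s ij ≤ MeasurableSpace.pi := fun ij => (measurable_pi_apply ij).comap_le
  set Qn : ℕ → Set (ℕ × ℕ) := fun n => {ij | n * k ≤ ij.1 ∧ n * l ≤ ij.2} with hQn
  have hQanti : Antitone Qn := by
    intro m n hmn ij hij
    exact ⟨le_trans (Nat.mul_le_mul_right k hmn) hij.1,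
      le_trans (Nat.mul_le_mul_right l hmn) hij.2⟩
  set F : Filter (ℕ × ℕ) := ⨅ n, Filter.principal (Qn n) with hF
  have hdir : Directed (· ≥ ·) fun n => Filter.principal (Qn n) := by
    intro m n
    exact ⟨max m n, Filter.principal_mono.2 (hQanti (le_max_left m n)),
      Filter.principal_mono.2 (hQanti (le_max_right m n))⟩
  have hmemF : ∀ {t : Set (ℕ × ℕ)}, t ∈ F ↔ ∃ n, Qn n ⊆ t := by
    intro t
    rw [hF, Filter.mem_iInf_of_directed hdir]
    simp [Filter.mem_principal]
  -- invariance under iterated shifts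
  have h_iter : ∀ n : ℕ, shiftConfig (n * k) (n * l) ⁻¹' B = B := by
    intro n
    induction n with
    | zero =>
      have hid : shiftConfig (0 * k) (0 * l) = id := by
        funext ω ij
        simp [shiftConfig]
      rw [hid, Set.preimage_id]
    | succ n ih =>
      have hcomp : shiftConfig ((n + 1) * k) ((n + 1) * l)
          = shiftConfig (n * k) (n * l) ∘ shiftConfig k l := by
        funext ω ij
        show ω (ij.1 + (n + 1) * k, ij.2 + (n + 1) * l)
          = ω ((ij.1 + n * k) + k, (ij.2 + n * l) + l)
        congr 1
        simp only [Prod.mk.injEq]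
        constructor <;> ring
      rw [hcomp, Set.preimage_comp, ih, hinv]
  -- tail measurability
  have htail : MeasurableSet[Filter.limsup s F] B := by
    rw [Filter.limsup_eq]
    rw [MeasurableSpace.measurableSet_sInf]
    intro m hm
    have hm' : {ij : ℕ × ℕ | s ij ≤ m} ∈ F := hm
    obtain ⟨n, hn⟩ := hmemF.1 hm'
    have hBmem : MeasurableSet[MeasurableSpace.comap (shiftConfig (n * k) (n * l))
        MeasurableSpace.pi] B := ⟨B, hB, h_iter n⟩
    have hcle : MeasurableSpace.comap (shiftConfig (n * k) (n * l)) MeasurableSpace.pi ≤ m := by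
      have hpi : (MeasurableSpace.pi : MeasurableSpace ((ℕ × ℕ) → ℝ))
          = ⨆ ij : ℕ × ℕ, (inferInstance : MeasurableSpace ℝ).comap
              (fun ω : (ℕ × ℕ) → ℝ => ω ij) := rfl
      rw [hpi, MeasurableSpace.comap_iSup]
      refine iSup_le fun ij => ?_
      rw [MeasurableSpace.comap_comp]
      have heq : ((fun ω : (ℕ × ℕ) → ℝ => ω ij) ∘ shiftConfig (n * k) (n * l))
          = fun ω : (ℕ × ℕ) → ℝ => ω (ij.1 + n * k, ij.2 + n * l) := rfl
      rw [heq]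
      have hmem : (ij.1 + n * k, ij.2 + n * l) ∈ Qn n := ⟨Nat.le_add_left _ _, Nat.le_add_left _ _⟩
      exact hn hmem
    exact hcle B hBmem
  -- apply Kolmogorov's 0-1 law
  refine measure_zero_or_one_of_measurableSet_limsup (f := F)
    (p := fun t => ∃ n, ∀ ij ∈ Qn n, ij ∉ t)
    (ns := fun a : ℕ => {ij : ℕ × ℕ | ij.1 < (a + 1) * k ∨ ij.2 < (a + 1) * l})
    h_le hind.iIndep ?_ ?_ ?_ ?_ htail
  · rintro t ⟨n, hn⟩
    exact hmemF.2 ⟨n, fun ij hij => hn ij hij⟩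
  · refine Monotone.directed_le ?_
    intro a b hab ij hij
    rcases hij with h | h
    · exact Or.inl (lt_of_lt_of_le h (Nat.mul_le_mul_right k (by omega)))
    · exact Or.inr (lt_of_lt_of_le h (Nat.mul_le_mul_right l (by omega)))
  · intro a
    refine ⟨a + 1, fun ij hij h => ?_⟩
    rcases h with h | h
    · exact absurd hij.1 (by omega)
    · exact absurd hij.2 (by omega)
  · intro ij
    refine ⟨ij.1, Or.inl ?_⟩
    calc ij.1 < ij.1 + 1 := Nat.lt_succ_self _
    _ ≤ (ij.1 + 1) * k := Nat.le_mul_of_pos_right _ hk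

/-- The annealed law `ℙ` of the weights of the inhomogeneous exponential
corner growth model is ergodic with respect to the shift `θ_{k,l}` for every `k, l ≥ 1`:
every Borel set `B` with `θ_{k,l}⁻¹(B) = B` has `ℙ(B) ∈ {0,1}`. -/
theorem annealed_measure_ergodic_exponential
    -- the joint distribution `μ` of the rate sequences `(a, b)` (zero-based indexing,
    -- so `p.1 0` is `a_1` and `p.2 0` is `b_1`), a probability measure
    (μ : Measure ((ℕ → ℝ) × (ℕ → ℝ))) [IsProbabilityMeasure μ]
    -- the sequences take values in `(0, ∞)`
    (hpos : ∀ᵐ p ∂μ, (∀ n, 0 < p.1 n) ∧ (∀ n, 0 < p.2 n))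
    -- `μ` is ergodic under `τ_k × τ_l` for every `k, l ≥ 1` (in particular stationary)
    (herg : ∀ k l : ℕ, 0 < k → 0 < l → Ergodic (shiftPair k l) μ)
    -- the quenched law of the weights: given `(a,b)`, the weights are independent and
    -- `W(i+1, j+1)` is exponential with rate `a_{i+1} + b_{j+1}`
    (P : (ℕ → ℝ) × (ℕ → ℝ) → Measure ((ℕ × ℕ) → ℝ))
    (hP : ∀ᵐ p ∂μ,
      iIndepFun (fun ij (ω : (ℕ × ℕ) → ℝ) => ω ij) (P p) ∧
      ∀ i j : ℕ, Measure.map (fun ω : (ℕ × ℕ) → ℝ => ω (i, j)) (P p)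
        = expMeasure (p.1 i + p.2 j))
    -- the annealed law of the weights
    (ℙw : Measure ((ℕ × ℕ) → ℝ)) (hℙw : ℙw = μ.bind P)
    : ∀ k l : ℕ, 0 < k → 0 < l →
      ∀ B : Set ((ℕ × ℕ) → ℝ), MeasurableSet B → shiftConfig k l ⁻¹' B = B →
        ℙw B = 0 ∨ ℙw B = 1 := by
  intro k l hk hl B hB hinv
  by_cases hmeas : AEMeasurable P μ
  swap
  · left
    rw [hℙw, Measure.bind, Measure.map_of_not_aemeasurable hmeas, Measure.join_zero]
    rfl
  -- replace `P` by a measurable version `Q`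
  set Q : (ℕ → ℝ) × (ℕ → ℝ) → Measure ((ℕ × ℕ) → ℝ) := hmeas.mk P with hQdef
  have hQmeas : Measurable Q := hmeas.measurable_mk
  have hPQ : P =ᵐ[μ] Q := hmeas.ae_eq_mk
  have hbind : μ.bind P = μ.bind Q := by
    rw [Measure.bind, Measure.bind, Measure.map_congr hPQ]
  have hQ : ∀ᵐ p ∂μ,
      (iIndepFun (fun ij (ω : (ℕ × ℕ) → ℝ) => ω ij) (Q p) ∧
      ∀ i j : ℕ, Measure.map (fun ω : (ℕ × ℕ) → ℝ => ω (i, j)) (Q p)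
        = expMeasure (p.1 i + p.2 j)) := by
    filter_upwards [hP, hPQ] with p h1 h2
    rw [← h2]
    exact h1
  set T := shiftPair k l with hT
  have hTerg : Ergodic T μ := herg k l hk hl
  have hTqmp : Measure.QuasiMeasurePreserving T μ μ :=
    hTerg.toMeasurePreserving.quasiMeasurePreserving
  have hQT : ∀ᵐ p ∂μ,
      (iIndepFun (fun ij (ω : (ℕ × ℕ) → ℝ) => ω ij) (Q (T p)) ∧
      ∀ i j : ℕ, Measure.map (fun ω : (ℕ × ℕ) → ℝ => ω (i, j)) (Q (T p))
        = expMeasure ((T p).1 i + (T p).2 j)) := hTqmp.ae hQ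
  have hposT : ∀ᵐ p ∂μ, (∀ n, 0 < (T p).1 n) ∧ (∀ n, 0 < (T p).2 n) := hTqmp.ae hpos
  have hθ : Measurable (shiftConfig k l) := shiftConfig_measurable k l
  -- quenched probability of B is invariant and 0-1 valued
  have hfT : ∀ᵐ p ∂μ, Q (T p) B = Q p B := by
    filter_upwards [hQ, hQT, hpos, hposT] with p h h' hp hp'
    haveI : IsProbabilityMeasure (Q p) :=
      quenched_isProbability (add_pos (hp.1 0) (hp.2 0)) (h.2 0 0)
    haveI : IsProbabilityMeasure (Q (T p)) :=
      quenched_isProbability (add_pos (hp'.1 0) (hp'.2 0)) (h'.2 0 0)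
    have hmap : (Q p).map (shiftConfig k l) = Q (T p) := by
      refine quenched_map_shift h.1 h'.1 fun ij => ?_
      rw [h.2 (ij.1 + k) (ij.2 + l), h'.2 ij.1 ij.2]
      rfl
    rw [← hmap, Measure.map_apply hθ hB, hinv]
  have hzo : ∀ᵐ p ∂μ, Q p B = 0 ∨ Q p B = 1 := by
    filter_upwards [hQ] with p h
    exact quenched_zero_one h.1 hk hl hB hinv
  -- the set where the quenched probability is 1
  set f : (ℕ → ℝ) × (ℕ → ℝ) → ℝ≥0∞ := fun p => Q p B with hf
  have hfm : Measurable f := (Measure.measurable_coe hB).comp hQmeas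
  set A : Set ((ℕ → ℝ) × (ℕ → ℝ)) := f ⁻¹' {1} with hA
  have hAmeas : MeasurableSet A := hfm (measurableSet_singleton 1)
  have hAinv : T ⁻¹' A =ᵐ[μ] A := by
    rw [Filter.eventuallyEq_set]
    filter_upwards [hfT] with p hp
    simp only [hA, Set.mem_preimage, Set.mem_singleton_iff, hf]
    rw [hp]
  have hA01 : μ A = 0 ∨ μ A = 1 := by
    rcases hTerg.ae_empty_or_univ_of_preimage_ae_le' hAmeas.nullMeasurableSet hAinv.le
      (measure_ne_top μ A) with h | h
    · left
      rw [measure_congr h]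
      simp
    · right
      rw [measure_congr h]
      simp
  -- compute ℙw B
  have hPwB : ℙw B = μ A := by
    rw [hℙw, hbind, Measure.bind_apply hB hQmeas.aemeasurable]
    have hcong : ∫⁻ p, Q p B ∂μ = ∫⁻ p, A.indicator (fun _ => (1 : ℝ≥0∞)) p ∂μ := by
      refine lintegral_congr_ae ?_
      filter_upwards [hzo] with p hp
      rcases hp with h0 | h1
      · have hpA : p ∉ A := by
          simp only [hA, Set.mem_preimage, Set.mem_singleton_iff, hf, h0]
          exact zero_ne_one
        rw [Set.indicator_of_notMem hpA, h0]
      · have hpA : p ∈ A := by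
          simp only [hA, Set.mem_preimage, Set.mem_singleton_iff, hf, h1]
        rw [Set.indicator_of_mem hpA, h1]
    rw [hcong]
    exact lintegral_indicator_one hAmeas
  rw [hPwB]
  exact hA01
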